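/- In a soft reserve system or a hard reserve system induced by a baseline priority order, for any n ∈ {0, 1, ..., r_u}, any two smart reserve matchings σ, ν ∈ M_S^n satisfy: σ⁻¹(u) = ν⁻¹(u); the set of patients matched with a preferential treatment category that they are a beneficiary of is the same under σ and ν; and σ(I) = ν(I) (the same set of patients is matched overall). -/

import Mathlib

open Finset

section ReserveSystem

variable {I C : Type*} [Fintype I] [DecidableEq I] [Fintype C] [DecidableEq C]

/-- Patient `i` is eligible for category `c` (i.e. `i π_c ∅`). Priorities are encoded by
injective score functions `pr c : Option I → ℕ`, where `none` stands for `∅` and a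
higher score means a higher priority. -/
def Elig (pr : C → Option I → ℕ) (c : C) (i : I) : Prop :=
  pr c none < pr c (some i)

instance (pr : C → Option I → ℕ) (c : C) (i : I) : Decidable (Elig pr c i) := by
  unfold Elig; infer_instance

/-- A matching assigns each patient a category or `none`, respecting capacities `r`. -/
def IsMatching (r : C → ℕ) (μ : I → Option C) : Prop :=
  ∀ c : C, (univ.filter (fun i => μ i = some c)).card ≤ r c

/-- Soft reserves induced by the baseline priority `π`: every patient is eligible for
every category; the unreserved category `u` ranks patients by `π`; every other category
ranks its beneficiaries above non-beneficiaries and within each group by `π`. -/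
def BaselineSoft (π : I → ℕ) (Ben : C → Finset I) (u : C)
    (pr : C → Option I → ℕ) : Prop :=
  (∀ c i, pr c none < pr c (some i)) ∧
  (∀ i j : I, pr u (some j) < pr u (some i) ↔ π j < π i) ∧
  (∀ c, c ≠ u → ∀ i j : I, pr c (some j) < pr c (some i) ↔
      ((i ∈ Ben c ∧ j ∉ Ben c) ∨ ((i ∈ Ben c ↔ j ∈ Ben c) ∧ π j < π i)))

/-- Hard reserves induced by the baseline priority `π`: only beneficiaries are eligible
for a preferential treatment category, and they are ranked by `π`; the unreserved
category `u` ranks all patients by `π` (all eligible). -/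
def BaselineHard (π : I → ℕ) (Ben : C → Finset I) (u : C)
    (pr : C → Option I → ℕ) : Prop :=
  (∀ i, pr u none < pr u (some i)) ∧
  (∀ i j : I, pr u (some j) < pr u (some i) ↔ π j < π i) ∧
  (∀ c, c ≠ u → ∀ i, (i ∈ Ben c ↔ pr c none < pr c (some i))) ∧
  (∀ c, c ≠ u → ∀ i j, i ∈ Ben c → j ∈ Ben c →
      (pr c (some j) < pr c (some i) ↔ π j < π i))

/-- `i` is matched under `μ` to a preferential treatment category she is a beneficiary
of. -/
def BenefMatched (Ben : C → Finset I) (u : C) (μ : I → Option C) (i : I) : Prop :=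
  ∃ c, μ i = some c ∧ c ≠ u ∧ i ∈ Ben c

instance (Ben : C → Finset I) (u : C) (μ : I → Option C) (i : I) :
    Decidable (BenefMatched Ben u μ i) := by
  unfold BenefMatched; infer_instance

/-- Number of patients matched to preferential treatment categories they are
beneficiaries of. -/
def benefCount (Ben : C → Finset I) (u : C) (μ : I → Option C) : ℕ :=
  (univ.filter (fun i => BenefMatched Ben u μ i)).card

/-- `μ` is a matching that is maximal in beneficiary assignment. -/
def MaxBeneficiary (r : C → ℕ) (Ben : C → Finset I) (u : C) (μ : I → Option C) : Prop :=
  IsMatching r μ ∧ ∀ ν : I → Option C, IsMatching r ν →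
    benefCount Ben u ν ≤ benefCount Ben u μ

structure SmartState (I C : Type*) where
  Ju : Finset I
  J : Finset I
  Ms : Set (I → Option C)

attribute [local instance] Classical.propDecidable

/-- Step 1.(k) of the smart reserve matching algorithm, processing patient `i`. -/
noncomputable def smartStep (Ben : C → Finset I) (u : C) (n : ℕ)
    (st : SmartState I C) (i : I) : SmartState I C :=
  if st.Ju.card < n ∧ ∃ μ ∈ st.Ms, μ i = some u then
    ⟨insert i st.Ju, st.J, {μ ∈ st.Ms | μ i = some u}⟩
  else if ∃ μ ∈ st.Ms, BenefMatched Ben u μ i then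
    ⟨st.Ju, insert i st.J, {μ ∈ st.Ms | BenefMatched Ben u μ i}⟩
  else st

/-- Step 1 of the smart reserve matching algorithm: patients are processed one at a time
along the list `L` (which enumerates the patients in decreasing baseline priority),
starting from the set of all matchings that are maximal in beneficiary assignment. -/
noncomputable def smartRun (r : C → ℕ) (Ben : C → Finset I) (u : C) (n : ℕ)
    (L : List I) : SmartState I C :=
  L.foldl (smartStep Ben u n) ⟨∅, ∅, {μ | MaxBeneficiary r Ben u μ}⟩

/-- Assign one unit of category `c` to the highest baseline-priority remaining eligible
patient (if any). -/
noncomputable def fillOne (pr : C → Option I → ℕ) (π : I → ℕ) (c : C)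
    (st : (I → Option C) × Finset I) : (I → Option C) × Finset I :=
  if h : (st.2.filter (fun i => Elig pr c i)).Nonempty then
    (Function.update st.1
        (Classical.choose (Finset.exists_max_image (st.2.filter (fun i => Elig pr c i)) π h))
        (some c),
     st.2.erase
        (Classical.choose (Finset.exists_max_image (st.2.filter (fun i => Elig pr c i)) π h)))
  else st

/-- The set `M_S^n` of smart reserve matchings with parameter `n`: outcomes of Step 1
(processed along the baseline-priority-decreasing enumeration `L` of the patients),
followed by Step 2, which assigns the committed patients as in a chosen matching of the
final candidate set, and then fills the remaining units of the preferential treatment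
categories in an arbitrary order `P` followed by the remaining unreserved units, one at
a time to the highest baseline-priority remaining eligible patient. -/
noncomputable def SmartMatchings (pr : C → Option I → ℕ) (π : I → ℕ) (r : C → ℕ)
    (Ben : C → Finset I) (u : C) (n : ℕ) : Set (I → Option C) :=
  { σ | ∃ L : List I, L.Nodup ∧ (∀ i : I, i ∈ L) ∧ L.Pairwise (fun a b => π b < π a) ∧
      ∃ μ ∈ (smartRun r Ben u n L).Ms,
        ∃ P : List C, u ∉ P ∧
          (∀ c, c ≠ u → P.count c =
            r c - (((smartRun r Ben u n L).J).filter (fun i => μ i = some c)).card) ∧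
          σ = ((P ++ List.replicate (r u - (smartRun r Ben u n L).Ju.card) u).foldl
                (fun st c => fillOne pr π c st)
                (fun i =>
                    if i ∈ (smartRun r Ben u n L).Ju ∪ (smartRun r Ben u n L).J
                    then μ i else none,
                 univ \ ((smartRun r Ben u n L).Ju ∪ (smartRun r Ben u n L).J))).1 }

/-! ### Auxiliary lemmas -/

lemma aux_sorted_list_unique (π : I → ℕ) {L L' : List I}
    (h1 : L.Nodup) (h2 : ∀ i, i ∈ L) (h3 : L.Pairwise fun a b => π b < π a)
    (h1' : L'.Nodup) (h2' : ∀ i, i ∈ L') (h3' : L'.Pairwise fun a b => π b < π a) :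
    L = L' := by
  haveI : IsAntisymm I (fun a b => π b < π a) :=
    ⟨fun a b h h' => absurd h' (lt_asymm h)⟩
  exact List.Perm.eq_of_pairwise (fun a b _ _ h h' => absurd h' (lt_asymm h)) h3 h3'
    ((List.perm_ext_iff_of_nodup h1 h1').2 fun a => by simp [h2 a, h2' a])

lemma aux_smartStep_Ms (Ben : C → Finset I) (u : C) (n : ℕ) (st : SmartState I C) (i : I) :
    (smartStep Ben u n st i).Ms ⊆ st.Ms := by
  unfold smartStep; split_ifs
  · exact fun μ hμ => hμ.1
  · exact fun μ hμ => hμ.1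
  · exact fun μ hμ => hμ

lemma aux_smartStep_Ju (Ben : C → Finset I) (u : C) (n : ℕ) (st : SmartState I C) (i : I) :
    st.Ju ⊆ (smartStep Ben u n st i).Ju := by
  unfold smartStep; split_ifs
  · exact Finset.subset_insert _ _
  · exact subset_rfl
  · exact subset_rfl

lemma aux_smartStep_J (Ben : C → Finset I) (u : C) (n : ℕ) (st : SmartState I C) (i : I) :
    st.J ⊆ (smartStep Ben u n st i).J := by
  unfold smartStep; split_ifs
  · exact subset_rfl
  · exact Finset.subset_insert _ _
  · exact subset_rfl

lemma aux_smartFold_Ms (Ben : C → Finset I) (u : C) (n : ℕ) (L : List I) :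
    ∀ st : SmartState I C, (L.foldl (smartStep Ben u n) st).Ms ⊆ st.Ms := by
  induction L with
  | nil => exact fun st => subset_rfl
  | cons a L ih => exact fun st => (ih _).trans (aux_smartStep_Ms Ben u n st a)

lemma aux_smartFold_Ju (Ben : C → Finset I) (u : C) (n : ℕ) (L : List I) :
    ∀ st : SmartState I C, st.Ju ⊆ (L.foldl (smartStep Ben u n) st).Ju := by
  induction L with
  | nil => exact fun st => subset_rfl
  | cons a L ih => exact fun st => (aux_smartStep_Ju Ben u n st a).trans (ih _)

lemma aux_smartFold_J (Ben : C → Finset I) (u : C) (n : ℕ) (L : List I) :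
    ∀ st : SmartState I C, st.J ⊆ (L.foldl (smartStep Ben u n) st).J := by
  induction L with
  | nil => exact fun st => subset_rfl
  | cons a L ih => exact fun st => (aux_smartStep_J Ben u n st a).trans (ih _)

/-- The invariant maintained along Step 1. -/
def StInv (r : C → ℕ) (Ben : C → Finset I) (u : C) (n : ℕ) (st : SmartState I C) : Prop :=
  (∀ μ ∈ st.Ms, MaxBeneficiary r Ben u μ) ∧
  (∀ μ ∈ st.Ms, ∀ i ∈ st.Ju, μ i = some u) ∧
  (∀ μ ∈ st.Ms, ∀ i ∈ st.J, BenefMatched Ben u μ i) ∧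
  st.Ju.card ≤ n

lemma aux_smartStep_inv {r : C → ℕ} {Ben : C → Finset I} {u : C} {n : ℕ}
    {st : SmartState I C} (h : StInv r Ben u n st) (i : I) :
    StInv r Ben u n (smartStep Ben u n st i) := by
  obtain ⟨h1, h2, h3, h4⟩ := h
  unfold smartStep; split_ifs with hc1 hc2
  · refine ⟨fun μ hμ => h1 μ hμ.1, ?_, fun μ hμ => h3 μ hμ.1, ?_⟩
    · intro μ hμ j hj
      rcases Finset.mem_insert.1 hj with rfl | hj
      · exact hμ.2
      · exact h2 μ hμ.1 j hj
    · calc (insert i st.Ju).card ≤ st.Ju.card + 1 := Finset.card_insert_le _ _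
        _ ≤ n := hc1.1
  · refine ⟨fun μ hμ => h1 μ hμ.1, fun μ hμ => h2 μ hμ.1, ?_, h4⟩
    intro μ hμ j hj
    rcases Finset.mem_insert.1 hj with rfl | hj
    · exact hμ.2
    · exact h3 μ hμ.1 j hj
  · exact ⟨h1, h2, h3, h4⟩

lemma aux_run_inv (r : C → ℕ) (Ben : C → Finset I) (u : C) (n : ℕ) (L : List I) :
    StInv r Ben u n (smartRun r Ben u n L) := by
  have key : ∀ (M : List I) (st : SmartState I C), StInv r Ben u n st →
      StInv r Ben u n (M.foldl (smartStep Ben u n) st) := by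
    intro M
    induction M with
    | nil => exact fun st h => h
    | cons a M ih => exact fun st h => ih _ (aux_smartStep_inv h a)
  exact key L _ ⟨fun μ hμ => hμ, fun μ _ i hi => absurd hi (Finset.notMem_empty i),
    fun μ _ i hi => absurd hi (Finset.notMem_empty i), Nat.zero_le n⟩

lemma aux_smartStep_cases (Ben : C → Finset I) (u : C) (n : ℕ) (st : SmartState I C) (i : I) :
    i ∈ (smartStep Ben u n st i).Ju ∨ i ∈ (smartStep Ben u n st i).J ∨
      (smartStep Ben u n st i = st ∧ ∀ μ ∈ st.Ms, ¬ BenefMatched Ben u μ i) := by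
  unfold smartStep; split_ifs with h1 h2
  · exact Or.inl (Finset.mem_insert_self _ _)
  · exact Or.inr (Or.inl (Finset.mem_insert_self _ _))
  · exact Or.inr (Or.inr ⟨rfl, fun μ hμ hb => h2 ⟨μ, hμ, hb⟩⟩)

/-- A patient left uncommitted by Step 1 is not a beneficiary-match under any candidate
matching. -/
lemma aux_run_not_benef (r : C → ℕ) (Ben : C → Finset I) (u : C) (n : ℕ) {L : List I}
    (hL : ∀ i, i ∈ L) {i : I}
    (hiu : i ∉ (smartRun r Ben u n L).Ju) (hij : i ∉ (smartRun r Ben u n L).J)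
    {μ : I → Option C} (hμ : μ ∈ (smartRun r Ben u n L).Ms) :
    ¬ BenefMatched Ben u μ i := by
  obtain ⟨L1, L2, rfl⟩ := List.append_of_mem (hL i)
  have hrun : smartRun r Ben u n (L1 ++ i :: L2)
      = L2.foldl (smartStep Ben u n) (smartStep Ben u n
          (L1.foldl (smartStep Ben u n) ⟨∅, ∅, {μ | MaxBeneficiary r Ben u μ}⟩) i) := by
    unfold smartRun
    rw [List.foldl_append, List.foldl_cons]
  set st1 := L1.foldl (smartStep Ben u n) ⟨∅, ∅, {μ | MaxBeneficiary r Ben u μ}⟩ with hst1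
  rcases aux_smartStep_cases Ben u n st1 i with h | h | ⟨heq, hnb⟩
  · exact absurd (aux_smartFold_Ju Ben u n L2 _ h) (by rw [hrun] at hiu; exact hiu)
  · exact absurd (aux_smartFold_J Ben u n L2 _ h) (by rw [hrun] at hij; exact hij)
  · apply hnb μ
    rw [hrun, heq] at hμ
    exact aux_smartFold_Ms Ben u n L2 st1 hμ

/-- Key consequence of maximality in beneficiary assignment: after Step 1, no
uncommitted patient is a beneficiary of a preferential treatment category with a
spare unit. -/
lemma aux_no_extra_benef (r : C → ℕ) (Ben : C → Finset I) (u : C) (n : ℕ) {L : List I}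
    (hL : ∀ i, i ∈ L)
    {μ : I → Option C} (hμ : μ ∈ (smartRun r Ben u n L).Ms)
    {i : I} (hiu : i ∉ (smartRun r Ben u n L).Ju) (hij : i ∉ (smartRun r Ben u n L).J)
    {c : C} (hcu : c ≠ u) (hben : i ∈ Ben c)
    (hslack : ((smartRun r Ben u n L).J.filter (fun j => μ j = some c)).card < r c) :
    False := by
  set st := smartRun r Ben u n L with hst
  obtain ⟨h1, h2, h3, _⟩ := aux_run_inv r Ben u n L
  set μ' : I → Option C :=
    fun j => if j ∈ st.Ju ∪ st.J then μ j else if j = i then some c else none with hμ'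
  -- benefCount μ = st.J.card
  have hJset : univ.filter (BenefMatched Ben u μ) = st.J := by
    ext j
    simp only [Finset.mem_filter, Finset.mem_univ, true_and]
    constructor
    · intro hb
      by_contra hjJ
      by_cases hjJu : j ∈ st.Ju
      · obtain ⟨c', hc', hcu', _⟩ := hb
        rw [h2 μ hμ j hjJu] at hc'
        exact hcu' (Option.some.inj hc').symm
      · exact aux_run_not_benef r Ben u n hL hjJu hjJ hμ hb
    · exact fun hj => h3 μ hμ j hj
  -- μ' is a matching
  have hmatch : IsMatching r μ' := by
    intro d
    by_cases hd : d = c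
    · subst hd
      have hsub : univ.filter (fun j => μ' j = some d) ⊆
          insert i (st.J.filter (fun j => μ j = some d)) := by
        intro j hj
        simp only [Finset.mem_filter, Finset.mem_univ, true_and, hμ'] at hj
        by_cases hjm : j ∈ st.Ju ∪ st.J
        · rw [if_pos hjm] at hj
          rcases Finset.mem_union.1 hjm with hjm | hjm
          · rw [h2 μ hμ j hjm] at hj
            exact absurd (Option.some.inj hj).symm hcu
          · exact Finset.mem_insert_of_mem (Finset.mem_filter.2 ⟨hjm, hj⟩)
        · rw [if_neg hjm] at hj
          by_cases hji : j = i
          · exact hji ▸ Finset.mem_insert_self _ _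
          · rw [if_neg hji] at hj; exact absurd hj (by simp)
      calc (univ.filter (fun j => μ' j = some d)).card
          ≤ (insert i (st.J.filter (fun j => μ j = some d))).card :=
            Finset.card_le_card hsub
        _ ≤ (st.J.filter (fun j => μ j = some d)).card + 1 := Finset.card_insert_le _ _
        _ ≤ r d := hslack
    · have hsub : univ.filter (fun j => μ' j = some d) ⊆
          univ.filter (fun j => μ j = some d) := by
        intro j hj
        simp only [Finset.mem_filter, Finset.mem_univ, true_and, hμ'] at hj ⊢
        by_cases hjm : j ∈ st.Ju ∪ st.J
        · rwa [if_pos hjm] at hj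
        · rw [if_neg hjm] at hj
          by_cases hji : j = i
          · rw [if_pos hji] at hj
            exact absurd (Option.some.inj hj) (fun h => hd h.symm)
          · rw [if_neg hji] at hj; exact absurd hj (by simp)
      exact (Finset.card_le_card hsub).trans ((h1 μ hμ).1 d)
  -- benefCount μ' ≥ st.J.card + 1
  have hsub' : insert i st.J ⊆ univ.filter (BenefMatched Ben u μ') := by
    intro j hj
    simp only [Finset.mem_filter, Finset.mem_univ, true_and]
    rcases Finset.mem_insert.1 hj with h | hj
    · refine ⟨c, ?_, hcu, h ▸ hben⟩
      have hnotm : j ∉ st.Ju ∪ st.J := by rw [h]; simp [hiu, hij]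
      simp only [hμ']
      rw [if_neg hnotm, if_pos h]
    · obtain ⟨c', hc', hcu', hb'⟩ := h3 μ hμ j hj
      refine ⟨c', ?_, hcu', hb'⟩
      simp only [hμ']
      rw [if_pos (Finset.mem_union_right _ hj)]
      exact hc'
  have hle := (h1 μ hμ).2 μ' hmatch
  unfold benefCount at hle
  rw [hJset] at hle
  have : st.J.card + 1 ≤ st.J.card := by
    calc st.J.card + 1 = (insert i st.J).card :=
          (Finset.card_insert_of_notMem hij).symm
      _ ≤ (univ.filter (BenefMatched Ben u μ')).card := Finset.card_le_card hsub'
      _ ≤ st.J.card := hle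
  omega

/-- The (unique) chosen maximiser of `π` on `A`. -/
noncomputable def maxI (π : I → ℕ) (A : Finset I) (hA : A.Nonempty) : I :=
  Classical.choose (Finset.exists_max_image A π hA)

lemma maxI_mem (π : I → ℕ) (A : Finset I) (hA : A.Nonempty) : maxI π A hA ∈ A :=
  (Classical.choose_spec (Finset.exists_max_image A π hA)).1

lemma maxI_congr (π : I → ℕ) {s t : Finset I} (h : s = t) (hs : s.Nonempty)
    (ht : t.Nonempty) :
    Classical.choose (Finset.exists_max_image s π hs) = maxI π t ht := by
  subst h; rfl

lemma fillOne_of_empty (pr : C → Option I → ℕ) (π : I → ℕ) (c : C) (f : I → Option C)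
    (A : Finset I) (hA : A.filter (fun i => Elig pr c i) = ∅) :
    fillOne pr π c (f, A) = (f, A) := by
  have h0 : ¬ (A.filter fun i => Elig pr c i).Nonempty := by
    rw [hA]; exact Finset.not_nonempty_empty
  unfold fillOne
  rw [dif_neg h0]

lemma fillOne_eq (pr : C → Option I → ℕ) (π : I → ℕ) (c : C) (f : I → Option C)
    (A : Finset I) (he : ∀ i, Elig pr c i) (hA : A.Nonempty) :
    fillOne pr π c (f, A) =
      (Function.update f (maxI π A hA) (some c), A.erase (maxI π A hA)) := by
  have hf : A.filter (fun i => Elig pr c i) = A :=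
    Finset.filter_true_of_mem fun i _ => he i
  have h0 : (A.filter fun i => Elig pr c i).Nonempty := by rw [hf]; exact hA
  unfold fillOne
  rw [dif_pos h0, maxI_congr π hf h0 hA]

lemma fold_noop (pr : C → Option I → ℕ) (π : I → ℕ) :
    ∀ (Q : List C) (f : I → Option C) (A : Finset I),
    (∀ c ∈ Q, A.filter (fun i => Elig pr c i) = ∅) →
    Q.foldl (fun st c => fillOne pr π c st) (f, A) = (f, A) := by
  intro Q
  induction Q with
  | nil => intro f A _; rfl
  | cons c Q ih =>
    intro f A h
    rw [List.foldl_cons, fillOne_of_empty pr π c f A (h c List.mem_cons_self)]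
    exact ih f A fun d hd => h d (List.mem_cons_of_mem _ hd)

/-- Master congruence lemma for Step 2 (the filling phase). -/
lemma fold_master (pr : C → Option I → ℕ) (π : I → ℕ) (Ben : C → Finset I) (u : C) :
    ∀ {Q Q' : List C}, List.Forall₂ (fun c d => c = u ↔ d = u) Q Q' →
    ∀ (f g : I → Option C) (A : Finset I),
    (∀ c ∈ Q, ∀ i, Elig pr c i) → (∀ c ∈ Q', ∀ i, Elig pr c i) →
    (∀ c ∈ Q, c ≠ u → ∀ i ∈ A, i ∉ Ben c) →
    (∀ c ∈ Q', c ≠ u → ∀ i ∈ A, i ∉ Ben c) →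
    (∀ i ∈ A, f i = none) → (∀ i ∈ A, g i = none) →
    ((Q.foldl (fun st c => fillOne pr π c st) (f, A)).2
      = (Q'.foldl (fun st c => fillOne pr π c st) (g, A)).2) ∧
    (∀ i ∉ A, (Q.foldl (fun st c => fillOne pr π c st) (f, A)).1 i = f i ∧
              (Q'.foldl (fun st c => fillOne pr π c st) (g, A)).1 i = g i) ∧
    (∀ i ∈ A,
      ((Q.foldl (fun st c => fillOne pr π c st) (f, A)).1 i = some u ↔
       (Q'.foldl (fun st c => fillOne pr π c st) (g, A)).1 i = some u) ∧
      ((Q.foldl (fun st c => fillOne pr π c st) (f, A)).1 i = none ↔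
       (Q'.foldl (fun st c => fillOne pr π c st) (g, A)).1 i = none) ∧
      ¬ BenefMatched Ben u (Q.foldl (fun st c => fillOne pr π c st) (f, A)).1 i ∧
      ¬ BenefMatched Ben u (Q'.foldl (fun st c => fillOne pr π c st) (g, A)).1 i) := by
  intro Q Q' hQQ'
  induction hQQ' with
  | nil =>
    intro f g A _ _ _ _ hf hg
    refine ⟨rfl, fun i _ => ⟨rfl, rfl⟩, fun i hi => ?_⟩
    have h1 : (([] : List C).foldl (fun st c => fillOne pr π c st) (f, A)).1 i = none :=
      hf i hi
    have h2 : (([] : List C).foldl (fun st c => fillOne pr π c st) (g, A)).1 i = none :=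
      hg i hi
    refine ⟨by rw [h1, h2], by rw [h1, h2], ?_, ?_⟩
    · rintro ⟨c', hc', -, -⟩
      rw [h1] at hc'
      exact Option.some_ne_none c' hc'.symm
    · rintro ⟨c', hc', -, -⟩
      rw [h2] at hc'
      exact Option.some_ne_none c' hc'.symm
  | @cons c d Q Q' hcd htail ih =>
    intro f g A he1 he2 hb1 hb2 hf hg
    by_cases hA : A.Nonempty
    · rw [List.foldl_cons, List.foldl_cons,
        fillOne_eq pr π c f A (he1 c List.mem_cons_self) hA,
        fillOne_eq pr π d g A (he2 d List.mem_cons_self) hA]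
      set j := maxI π A hA with hj
      have hjA : j ∈ A := maxI_mem π A hA
      obtain ⟨h2eq, hoff, hon⟩ := ih (Function.update f j (some c))
        (Function.update g j (some d)) (A.erase j)
        (fun e heQ i => he1 e (List.mem_cons_of_mem _ heQ) i)
        (fun e heQ i => he2 e (List.mem_cons_of_mem _ heQ) i)
        (fun e heQ heu i hi =>
          hb1 e (List.mem_cons_of_mem _ heQ) heu i (Finset.mem_of_mem_erase hi))
        (fun e heQ heu i hi =>
          hb2 e (List.mem_cons_of_mem _ heQ) heu i (Finset.mem_of_mem_erase hi))
        (fun i hi => by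
          rw [Function.update_of_ne (Finset.ne_of_mem_erase hi)]
          exact hf i (Finset.mem_of_mem_erase hi))
        (fun i hi => by
          rw [Function.update_of_ne (Finset.ne_of_mem_erase hi)]
          exact hg i (Finset.mem_of_mem_erase hi))
      refine ⟨h2eq, ?_, ?_⟩
      · intro i hiA
        have hij : i ≠ j := fun h => hiA (h ▸ hjA)
        have hie : i ∉ A.erase j := fun h => hiA (Finset.mem_of_mem_erase h)
        obtain ⟨ha, hb⟩ := hoff i hie
        rw [ha, hb, Function.update_of_ne hij, Function.update_of_ne hij]
        exact ⟨rfl, rfl⟩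
      · intro i hiA
        by_cases hij : i = j
        · have hje : i ∉ A.erase j := by rw [hij]; exact Finset.notMem_erase j A
          obtain ⟨ha, hb⟩ := hoff i hje
          have ha' : (Q.foldl (fun st c => fillOne pr π c st)
              (Function.update f j (some c), A.erase j)).1 i = some c := by
            rw [ha, hij, Function.update_self]
          have hb' : (Q'.foldl (fun st c => fillOne pr π c st)
              (Function.update g j (some d), A.erase j)).1 i = some d := by
            rw [hb, hij, Function.update_self]
          refine ⟨?_, ?_, ?_, ?_⟩
          · rw [ha', hb']
            simp only [Option.some.injEq]
            exact hcd
          · rw [ha', hb']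
            simp
          · rintro ⟨c', hc', hcu', hbc'⟩
            rw [ha'] at hc'
            have hcc : c = c' := Option.some.inj hc'
            subst hcc
            exact hb1 c List.mem_cons_self hcu' i hiA hbc'
          · rintro ⟨d', hd', hdu', hbd'⟩
            rw [hb'] at hd'
            have hdd : d = d' := Option.some.inj hd'
            subst hdd
            exact hb2 d List.mem_cons_self hdu' i hiA hbd'
        · exact hon i (Finset.mem_erase.2 ⟨hij, hiA⟩)
    · have hAe : A = ∅ := Finset.not_nonempty_iff_eq_empty.1 hA
      subst hAe
      rw [List.foldl_cons, List.foldl_cons,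
        fillOne_of_empty pr π c f ∅ (by simp),
        fillOne_of_empty pr π d g ∅ (by simp)]
      exact ih f g ∅ (fun e heQ i => he1 e (List.mem_cons_of_mem _ heQ) i)
        (fun e heQ i => he2 e (List.mem_cons_of_mem _ heQ) i)
        (fun e heQ heu i hi => absurd hi (Finset.notMem_empty i))
        (fun e heQ heu i hi => absurd hi (Finset.notMem_empty i))
        (fun i hi => absurd hi (Finset.notMem_empty i))
        (fun i hi => absurd hi (Finset.notMem_empty i))

/-- The number of preferential-treatment units to be filled in Step 2 does not depend
on the chosen candidate matching. -/
lemma aux_length_P (r : C → ℕ) (Ben : C → Finset I) (u : C) {J : Finset I}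
    {μ : I → Option C} {P : List C} (hPu : u ∉ P)
    (hPc : ∀ c, c ≠ u → P.count c = r c - (J.filter (fun i => μ i = some c)).card)
    (hb : ∀ i ∈ J, BenefMatched Ben u μ i)
    (hcap : ∀ c, (J.filter (fun i => μ i = some c)).card ≤ r c) :
    P.length = (∑ c ∈ univ.erase u, r c) - J.card := by
  have hlen : P.length = ∑ c ∈ (univ : Finset C), P.count c := by
    have := Multiset.sum_count_eq_card (s := (univ : Finset C))
      (m := (P : Multiset C)) (fun a _ => mem_univ a)
    rw [Multiset.coe_card] at this
    rw [← this]
    apply Finset.sum_congr rfl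
    intro c _
    exact Multiset.coe_count c P
  have hsum : ∑ c ∈ (univ : Finset C), P.count c
      = P.count u + ∑ c ∈ univ.erase u, P.count c :=
    (Finset.add_sum_erase univ _ (mem_univ u)).symm
  have hu0 : P.count u = 0 := List.count_eq_zero.2 hPu
  have hJ : ∑ c ∈ univ.erase u, (J.filter (fun i => μ i = some c)).card = J.card := by
    have : ∀ c ∈ univ.erase u, (J.filter (fun i => μ i = some c)).card
        = ∑ i ∈ J, (if μ i = some c then 1 else 0) := by
      intro c _
      rw [Finset.card_filter]
    rw [Finset.sum_congr rfl this, Finset.sum_comm]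
    have : ∀ i ∈ J, ∑ c ∈ univ.erase u, (if μ i = some c then 1 else 0) = 1 := by
      intro i hi
      obtain ⟨c₀, hc₀, hcu₀, _⟩ := hb i hi
      have heq : ∀ c : C, (μ i = some c) = (c = c₀) := by
        intro c
        apply propext
        constructor
        · intro h
          rw [hc₀] at h
          exact (Option.some.inj h).symm
        · rintro rfl
          exact hc₀
      simp only [heq]
      rw [Finset.sum_ite_eq' (univ.erase u) c₀ (fun _ => 1)]
      rw [if_pos (Finset.mem_erase.2 ⟨hcu₀, mem_univ c₀⟩)]
    rw [Finset.sum_congr rfl this]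
    simp
  have hcount : ∀ c ∈ univ.erase u, P.count c
      = r c - (J.filter (fun i => μ i = some c)).card := by
    intro c hc
    exact hPc c (Finset.mem_erase.1 hc).1
  rw [hlen, hsum, hu0, Finset.sum_congr rfl hcount,
    Finset.sum_tsub_distrib _ (fun c hc => hcap c), hJ, zero_add]

lemma aux_forall2_ne (u : C) :
    ∀ (P P' : List C), P.length = P'.length → (∀ c ∈ P, c ≠ u) → (∀ c ∈ P', c ≠ u) →
    List.Forall₂ (fun c d => c = u ↔ d = u) P P' := by
  intro P
  induction P with
  | nil =>
    intro P' hlen _ _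
    rw [List.length_nil] at hlen
    rw [List.eq_nil_of_length_eq_zero hlen.symm]
    exact List.Forall₂.nil
  | cons c P ih =>
    intro P' hlen h1 h2
    cases P' with
    | nil => simp at hlen
    | cons d P'' =>
      refine List.Forall₂.cons ?_ (ih P'' (by simpa using hlen)
        (fun e he => h1 e (List.mem_cons_of_mem _ he))
        (fun e he => h2 e (List.mem_cons_of_mem _ he)))
      constructor
      · intro h; exact absurd h (h1 c List.mem_cons_self)
      · intro h; exact absurd h (h2 d List.mem_cons_self)

lemma aux_forall2_rep (u : C) (m : ℕ) :
    List.Forall₂ (fun c d => c = u ↔ d = u) (List.replicate m u) (List.replicate m u) := by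
  induction m with
  | zero => exact List.Forall₂.nil
  | succ m ih =>
    rw [List.replicate_succ]
    exact List.Forall₂.cons Iff.rfl ih

/-- Lemma 2: for a soft or hard reserve system induced by a baseline priority order and
any `n ∈ {0, …, r_u}`, any two smart reserve matchings in `M_S^n` match the same set of
patients with the unreserved category, the same set of patients with preferential
treatment categories they are beneficiaries of, and the same set of patients overall. -/
theorem smart_matchings_same_patients
    (π : I → ℕ) (hπ : Function.Injective π)
    (Ben : C → Finset I) (u : C) (hBu : Ben u = univ)
    (pr : C → Option I → ℕ) (hpr : ∀ c, Function.Injective (pr c))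
    (r : C → ℕ)
    (hbase : BaselineSoft π Ben u pr ∨ BaselineHard π Ben u pr)
    (n : ℕ) (hn : n ≤ r u)
    (σ ν : I → Option C)
    (hσ : σ ∈ SmartMatchings pr π r Ben u n)
    (hν : ν ∈ SmartMatchings pr π r Ben u n) :
    (∀ i, σ i = some u ↔ ν i = some u) ∧
    (∀ i, BenefMatched Ben u σ i ↔ BenefMatched Ben u ν i) ∧
    (∀ i, σ i ≠ none ↔ ν i ≠ none) := by
  obtain ⟨L, hnd, hmem, hsort, μ, hμ, P, hPu, hPcount, hσeq⟩ := hσ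
  obtain ⟨L', hnd', hmem', hsort', μ', hμ', P', hPu', hPcount', hνeq⟩ := hν
  have hLL : L = L' := aux_sorted_list_unique π hnd hmem hsort hnd' hmem' hsort'
  subst hLL
  subst hσeq
  subst hνeq
  set st := smartRun r Ben u n L with hst
  obtain ⟨h1, h2, h3, h4⟩ := aux_run_inv r Ben u n L
  rw [← hst] at h1 h2 h3 h4
  set S : Finset I := univ \ (st.Ju ∪ st.J) with hS
  set f : I → Option C := fun i => if i ∈ st.Ju ∪ st.J then μ i else none with hf
  set g : I → Option C := fun i => if i ∈ st.Ju ∪ st.J then μ' i else none with hg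
  set m : ℕ := r u - st.Ju.card with hm
  -- basic facts
  have hPne : ∀ c ∈ P, c ≠ u := fun c hc h => hPu (h ▸ hc)
  have hPne' : ∀ c ∈ P', c ≠ u := fun c hc h => hPu' (h ▸ hc)
  have hcapμ : ∀ c, ((st.J).filter (fun i => μ i = some c)).card ≤ r c := fun c =>
    le_trans (Finset.card_le_card
      (Finset.filter_subset_filter _ (Finset.subset_univ st.J))) ((h1 μ hμ).1 c)
  have hcapμ' : ∀ c, ((st.J).filter (fun i => μ' i = some c)).card ≤ r c := fun c =>
    le_trans (Finset.card_le_card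
      (Finset.filter_subset_filter _ (Finset.subset_univ st.J))) ((h1 μ' hμ').1 c)
  have hPlen : P.length = (∑ c ∈ univ.erase u, r c) - st.J.card :=
    aux_length_P r Ben u hPu hPcount (fun i hi => h3 μ hμ i hi) hcapμ
  have hPlen' : P'.length = (∑ c ∈ univ.erase u, r c) - st.J.card :=
    aux_length_P r Ben u hPu' hPcount' (fun i hi => h3 μ' hμ' i hi) hcapμ'
  have hkP : ∀ c ∈ P, ((st.J).filter (fun i => μ i = some c)).card < r c := by
    intro c hc
    have h0 : 0 < P.count c := List.count_pos_iff.2 hc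
    rw [hPcount c (hPne c hc)] at h0
    omega
  have hkP' : ∀ c ∈ P', ((st.J).filter (fun i => μ' i = some c)).card < r c := by
    intro c hc
    have h0 : 0 < P'.count c := List.count_pos_iff.2 hc
    rw [hPcount' c (hPne' c hc)] at h0
    omega
  have hSmem : ∀ i ∈ S, i ∉ st.Ju ∪ st.J := fun i hi => (Finset.mem_sdiff.1 hi).2
  have hSben : ∀ c ∈ P, ∀ i ∈ S, i ∉ Ben c := by
    intro c hc i hiS hben
    have hiu : i ∉ st.Ju := fun h => hSmem i hiS (Finset.mem_union_left _ h)
    have hij : i ∉ st.J := fun h => hSmem i hiS (Finset.mem_union_right _ h)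
    exact aux_no_extra_benef r Ben u n hmem hμ hiu hij (hPne c hc) hben (hkP c hc)
  have hSben' : ∀ c ∈ P', ∀ i ∈ S, i ∉ Ben c := by
    intro c hc i hiS hben
    have hiu : i ∉ st.Ju := fun h => hSmem i hiS (Finset.mem_union_left _ h)
    have hij : i ∉ st.J := fun h => hSmem i hiS (Finset.mem_union_right _ h)
    exact aux_no_extra_benef r Ben u n hmem hμ' hiu hij (hPne' c hc) hben (hkP' c hc)
  have hfS : ∀ i ∈ S, f i = none := by
    intro i hi
    rw [hf]
    exact if_neg (hSmem i hi)
  have hgS : ∀ i ∈ S, g i = none := by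
    intro i hi
    rw [hg]
    exact if_neg (hSmem i hi)
  have hQben : ∀ c ∈ P ++ List.replicate m u, c ≠ u → ∀ i ∈ S, i ∉ Ben c := by
    intro c hc hcu i hi
    rcases List.mem_append.1 hc with hc | hc
    · exact hSben c hc i hi
    · exact absurd (List.eq_of_mem_replicate hc) hcu
  have hQben' : ∀ c ∈ P' ++ List.replicate m u, c ≠ u → ∀ i ∈ S, i ∉ Ben c := by
    intro c hc hcu i hi
    rcases List.mem_append.1 hc with hc | hc
    · exact hSben' c hc i hi
    · exact absurd (List.eq_of_mem_replicate hc) hcu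
  -- the master congruence, in both regimes
  have key :
      (∀ i ∉ S,
        ((P ++ List.replicate m u).foldl (fun st c => fillOne pr π c st) (f, S)).1 i = f i ∧
        ((P' ++ List.replicate m u).foldl (fun st c => fillOne pr π c st) (g, S)).1 i = g i) ∧
      (∀ i ∈ S,
        (((P ++ List.replicate m u).foldl (fun st c => fillOne pr π c st) (f, S)).1 i = some u ↔
         ((P' ++ List.replicate m u).foldl (fun st c => fillOne pr π c st) (g, S)).1 i = some u) ∧
        (((P ++ List.replicate m u).foldl (fun st c => fillOne pr π c st) (f, S)).1 i = none ↔
         ((P' ++ List.replicate m u).foldl (fun st c => fillOne pr π c st) (g, S)).1 i = none) ∧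
        ¬ BenefMatched Ben u
            ((P ++ List.replicate m u).foldl (fun st c => fillOne pr π c st) (f, S)).1 i ∧
        ¬ BenefMatched Ben u
            ((P' ++ List.replicate m u).foldl (fun st c => fillOne pr π c st) (g, S)).1 i) := by
    rcases hbase with hsoft | hhard
    · -- soft reserves: every patient eligible for every category
      have helig : ∀ (c : C) (i : I), Elig pr c i := fun c i => hsoft.1 c i
      have hF2 : List.Forall₂ (fun c d => c = u ↔ d = u)
          (P ++ List.replicate m u) (P' ++ List.replicate m u) :=
        List.rel_append (aux_forall2_ne u P P' (hPlen.trans hPlen'.symm) hPne hPne')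
          (aux_forall2_rep u m)
      have := fold_master pr π Ben u hF2 f g S
        (fun c _ i => helig c i) (fun c _ i => helig c i) hQben hQben' hfS hgS
      exact ⟨this.2.1, this.2.2⟩
    · -- hard reserves: the preferential fills are vacuous
      have heligu : ∀ i : I, Elig pr u i := fun i => hhard.1 i
      have hfiltP : ∀ c ∈ P, S.filter (fun i => Elig pr c i) = ∅ := by
        intro c hc
        rw [Finset.filter_eq_empty_iff]
        intro i hi he
        exact hSben c hc i hi ((hhard.2.2.1 c (hPne c hc) i).2 he)
      have hfiltP' : ∀ c ∈ P', S.filter (fun i => Elig pr c i) = ∅ := by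
        intro c hc
        rw [Finset.filter_eq_empty_iff]
        intro i hi he
        exact hSben' c hc i hi ((hhard.2.2.1 c (hPne' c hc) i).2 he)
      have hredσ : (P ++ List.replicate m u).foldl (fun st c => fillOne pr π c st) (f, S)
          = (List.replicate m u).foldl (fun st c => fillOne pr π c st) (f, S) := by
        rw [List.foldl_append, fold_noop pr π P f S hfiltP]
      have hredν : (P' ++ List.replicate m u).foldl (fun st c => fillOne pr π c st) (g, S)
          = (List.replicate m u).foldl (fun st c => fillOne pr π c st) (g, S) := by
        rw [List.foldl_append, fold_noop pr π P' g S hfiltP']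
      have hrepe : ∀ c ∈ List.replicate m u, ∀ i : I, Elig pr c i := by
        intro c hc i
        rw [List.eq_of_mem_replicate hc]
        exact heligu i
      have hrepb : ∀ c ∈ List.replicate m u, c ≠ u → ∀ i ∈ S, i ∉ Ben c := by
        intro c hc hcu
        exact absurd (List.eq_of_mem_replicate hc) hcu
      have := fold_master pr π Ben u (aux_forall2_rep u m) f g S
        hrepe hrepe hrepb hrepb hfS hgS
      rw [← hredσ, ← hredν] at this
      exact ⟨this.2.1, this.2.2⟩
  -- conclude, splitting on the position of each patient
  have hiM : ∀ i : I, i ∉ S → i ∈ st.Ju ∪ st.J := by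
    intro i hi
    by_contra h
    exact hi (Finset.mem_sdiff.2 ⟨mem_univ i, h⟩)
  refine ⟨fun i => ?_, fun i => ?_, fun i => ?_⟩
  · -- same unreserved assignments
    by_cases hiS : i ∈ S
    · exact ((key.2 i hiS).1)
    · obtain ⟨hfi, hgi⟩ := key.1 i hiS
      rw [hfi, hgi, hf, hg]
      simp only [if_pos (hiM i hiS)]
      rcases Finset.mem_union.1 (hiM i hiS) with hiJu | hiJ
      · rw [h2 μ hμ i hiJu, h2 μ' hμ' i hiJu]
      · obtain ⟨c, hc, hcu, -⟩ := h3 μ hμ i hiJ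
        obtain ⟨c', hc', hcu', -⟩ := h3 μ' hμ' i hiJ
        rw [hc, hc']
        simp only [Option.some.injEq]
        exact ⟨fun h => absurd h hcu, fun h => absurd h hcu'⟩
  · -- same beneficiary assignments
    by_cases hiS : i ∈ S
    · exact ⟨fun h => absurd h (key.2 i hiS).2.2.1, fun h => absurd h (key.2 i hiS).2.2.2⟩
    · obtain ⟨hfi, hgi⟩ := key.1 i hiS
      rcases Finset.mem_union.1 (hiM i hiS) with hiJu | hiJ
      · constructor
        · rintro ⟨c', hc', hcu', -⟩
          rw [hfi, hf] at hc'
          simp only [if_pos (hiM i hiS)] at hc'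
          rw [h2 μ hμ i hiJu] at hc'
          exact absurd (Option.some.inj hc').symm hcu'
        · rintro ⟨c', hc', hcu', -⟩
          rw [hgi, hg] at hc'
          simp only [if_pos (hiM i hiS)] at hc'
          rw [h2 μ' hμ' i hiJu] at hc'
          exact absurd (Option.some.inj hc').symm hcu'
      · obtain ⟨c, hc, hcu, hbc⟩ := h3 μ hμ i hiJ
        obtain ⟨c', hc', hcu', hbc'⟩ := h3 μ' hμ' i hiJ
        constructor
        · intro _
          refine ⟨c', ?_, hcu', hbc'⟩
          rw [hgi, hg]
          simp only [if_pos (hiM i hiS)]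
          exact hc'
        · intro _
          refine ⟨c, ?_, hcu, hbc⟩
          rw [hfi, hf]
          simp only [if_pos (hiM i hiS)]
          exact hc
  · -- same set of matched patients
    by_cases hiS : i ∈ S
    · exact not_congr (key.2 i hiS).2.1
    · obtain ⟨hfi, hgi⟩ := key.1 i hiS
      rw [hfi, hgi, hf, hg]
      simp only [if_pos (hiM i hiS)]
      rcases Finset.mem_union.1 (hiM i hiS) with hiJu | hiJ
      · rw [h2 μ hμ i hiJu, h2 μ' hμ' i hiJu]
      · obtain ⟨c, hc, -, -⟩ := h3 μ hμ i hiJ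
        obtain ⟨c', hc', -, -⟩ := h3 μ' hμ' i hiJ
        rw [hc, hc']
        simp

end ReserveSystem
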